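/- Let g : ℝ → ℝ and σ, τ > 0, and let A be a real number with |A| > 1. If |g(z)| ≤ min{σ, τ/|z|²} for all z ≠ 0, then for every z ≠ 0, ∑_{j ∈ ℤ} |A^j g(A^j z)| ≤ (2|A|/(|A|−1)) · √(στ)/|z|. -/

import Mathlib

lemma my_abs_zpow (x : ℝ) (n : ℤ) : |x ^ n| = |x| ^ n := map_zpow₀ absHom x n

lemma aux_geom (b : ℝ) (hb0 : 0 ≤ b) (hb1 : b < 1) (s : Finset ℤ) (m : ℤ → ℕ)
    (hm : ∀ j ∈ s, ∀ k ∈ s, m j = m k → j = k) :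
    ∑ j ∈ s, b ^ m j ≤ (1 - b)⁻¹ := by
  calc ∑ j ∈ s, b ^ m j = ∑ k ∈ s.image m, b ^ k := (Finset.sum_image hm).symm
    _ ≤ ∑' k : ℕ, b ^ k :=
        Summable.sum_le_tsum _ (fun _ _ => pow_nonneg hb0 _) (summable_geometric_of_lt_one hb0 hb1)
    _ = (1 - b)⁻¹ := tsum_geometric_of_lt_one hb0 hb1

theorem geometric_sum_decay_two (g : ℝ → ℝ) (A σ τ : ℝ) (hσ : 0 < σ) (hτ : 0 < τ)
    (hA : 1 < |A|)
    (hg : ∀ z : ℝ, z ≠ 0 → |g z| ≤ min σ (τ / |z| ^ 2)) :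
    ∀ z : ℝ, z ≠ 0 →
      Summable (fun j : ℤ => |A ^ j * g (A ^ j * z)|) ∧
      ∑' j : ℤ, |A ^ j * g (A ^ j * z)| ≤ (2 * |A| / (|A| - 1)) * Real.sqrt (σ * τ) / |z| := by
  intro z hz
  set a : ℝ := |A| with ha_def
  have ha1 : (1:ℝ) < a := hA
  have ha0 : (0:ℝ) < a := lt_trans one_pos ha1
  have hA0 : A ≠ 0 := fun h => by simp [ha_def, h] at ha0
  have hz0 : 0 < |z| := abs_pos.mpr hz
  have hla : 0 < Real.log a := Real.log_pos ha1
  set r : ℝ := Real.sqrt (τ / σ) with hr_def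
  have hr : 0 < r := Real.sqrt_pos.mpr (by positivity)
  set c : ℝ := |z| / r with hc_def
  have hc : 0 < c := by positivity
  set n : ℤ := ⌊-Real.log c / Real.log a⌋ with hn_def
  set K : ℝ := Real.sqrt (σ * τ) / |z| with hK_def
  have hsqrt : 0 < Real.sqrt (σ * τ) := Real.sqrt_pos.mpr (by positivity)
  have hK : 0 < K := by positivity
  -- sqrt identities
  have hr2 : r ^ 2 = τ / σ := Real.sq_sqrt (by positivity)
  have hst1 : Real.sqrt (σ * τ) = σ * r := by
    rw [show σ * τ = (σ * r) ^ 2 by rw [mul_pow, hr2]; field_simp]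
    exact Real.sqrt_sq (by positivity)
  have hst2 : Real.sqrt (σ * τ) = τ / r := by
    rw [show σ * τ = (τ / r) ^ 2 by rw [div_pow, hr2]; field_simp]
    exact Real.sqrt_sq (by positivity)
  -- floor inequalities
  have hcn : c * a ^ n ≤ 1 := by
    have h1 : (n : ℝ) ≤ -Real.log c / Real.log a := Int.floor_le _
    have h2 : (n : ℝ) * Real.log a ≤ -Real.log c := (le_div_iff₀ hla).mp h1
    have h3 : Real.log (c * a ^ n) ≤ 0 := by
      rw [Real.log_mul hc.ne' (zpow_ne_zero n ha0.ne'), Real.log_zpow]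
      linarith
    exact (Real.log_nonpos_iff (by positivity)).mp h3
  have hcn1 : 1 ≤ c * a ^ (n + 1) := by
    have h1 : -Real.log c / Real.log a < (n : ℝ) + 1 := Int.lt_floor_add_one _
    have h2 : -Real.log c ≤ ((n : ℝ) + 1) * Real.log a := le_of_lt ((div_lt_iff₀ hla).mp h1)
    have h3 : 0 ≤ Real.log (c * a ^ (n + 1)) := by
      rw [Real.log_mul hc.ne' (zpow_ne_zero _ ha0.ne'), Real.log_zpow]
      push_cast
      linarith
    exact (Real.log_nonneg_iff (by positivity)).mp h3
  set b : ℝ := a⁻¹ with hb_def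
  have hb0 : (0:ℝ) ≤ b := by positivity
  have hb1 : b < 1 := by
    rw [hb_def, inv_lt_one_iff₀]
    right; exact ha1
  set e : ℤ → ℕ := fun j => if j ≤ n then (n - j).toNat else (j - n - 1).toNat with he_def
  have hbpow : ∀ m : ℤ, 0 ≤ m → b ^ m.toNat = a ^ (-m) := by
    intro m hm
    rw [hb_def, ← zpow_natCast, inv_zpow, ← zpow_neg, Int.toNat_of_nonneg hm]
  -- the two key constant bounds
  have hσan : σ * a ^ n ≤ K := by
    have h1 : a ^ n ≤ r / |z| := by
      rw [le_div_iff₀ hz0]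
      calc a ^ n * |z| = (c * a ^ n) * r := by rw [hc_def]; field_simp
        _ ≤ 1 * r := by
            exact mul_le_mul_of_nonneg_right hcn hr.le
        _ = r := one_mul r
    calc σ * a ^ n ≤ σ * (r / |z|) := mul_le_mul_of_nonneg_left h1 hσ.le
      _ = σ * r / |z| := by ring
      _ = K := by rw [hK_def, hst1]
  have hτan : τ / (a ^ (n + 1) * |z| ^ 2) ≤ K := by
    have h1 : r * |z| ≤ a ^ (n + 1) * |z| ^ 2 := by
      have h2 : r ≤ a ^ (n + 1) * |z| := by
        calc r = 1 * r := (one_mul r).symm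
          _ ≤ (c * a ^ (n + 1)) * r := mul_le_mul_of_nonneg_right hcn1 hr.le
          _ = a ^ (n + 1) * |z| := by rw [hc_def]; field_simp
      nlinarith
    rw [hK_def, hst2]
    rw [div_div]
    exact div_le_div_of_nonneg_left hτ.le (by positivity) h1
  -- per-term bound
  have key : ∀ j : ℤ, |A ^ j * g (A ^ j * z)| ≤ K * b ^ e j := by
    intro j
    have hne : A ^ j * z ≠ 0 := mul_ne_zero (zpow_ne_zero j hA0) hz
    have hzp : (0:ℝ) < a ^ j := zpow_pos ha0 j
    have habs : |A ^ j * g (A ^ j * z)| = a ^ j * |g (A ^ j * z)| := by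
      rw [abs_mul, my_abs_zpow]
    have hAz : |A ^ j * z| = a ^ j * |z| := by rw [abs_mul, my_abs_zpow]
    rw [habs]
    by_cases hj : j ≤ n
    · have hb' : b ^ e j = a ^ (j - n) := by
        have : e j = (n - j).toNat := by simp [he_def, hj]
        rw [this, hbpow (n - j) (by omega)]
        congr 1; ring
      calc a ^ j * |g (A ^ j * z)| ≤ a ^ j * σ :=
            mul_le_mul_of_nonneg_left (le_trans (hg _ hne) (min_le_left _ _)) hzp.le
        _ = (σ * a ^ n) * a ^ (j - n) := by
            rw [mul_assoc, ← zpow_add₀ ha0.ne']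
            rw [show n + (j - n) = j by ring, mul_comm]
        _ ≤ K * a ^ (j - n) := mul_le_mul_of_nonneg_right hσan (zpow_pos ha0 _).le
        _ = K * b ^ e j := by rw [hb']
    · have hb' : b ^ e j = a ^ (n + 1 - j) := by
        have : e j = (j - n - 1).toNat := by simp [he_def, hj]
        rw [this, hbpow (j - n - 1) (by omega)]
        congr 1; ring
      have hmin : |g (A ^ j * z)| ≤ τ / (a ^ j * |z|) ^ 2 := by
        have := le_trans (hg _ hne) (min_le_right _ _)
        rwa [hAz] at this
      have hexp : a ^ (n + 1 - j) * a ^ j = a ^ (n + 1) := by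
        rw [← zpow_add₀ ha0.ne']; congr 1; ring
      calc a ^ j * |g (A ^ j * z)| ≤ a ^ j * (τ / (a ^ j * |z|) ^ 2) :=
            mul_le_mul_of_nonneg_left hmin hzp.le
        _ = τ / (a ^ j * |z| ^ 2) := by
            field_simp [sq_abs]
        _ = (τ / (a ^ (n + 1) * |z| ^ 2)) * a ^ (n + 1 - j) := by
            rw [div_mul_eq_mul_div, div_eq_div_iff (by positivity) (by positivity)]
            linear_combination -τ * |z| ^ 2 * hexp
        _ ≤ K * a ^ (n + 1 - j) := mul_le_mul_of_nonneg_right hτan (zpow_pos ha0 _).le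
        _ = K * b ^ e j := by rw [hb']
  -- finite sum bound
  have sum_bound : ∀ s : Finset ℤ,
      ∑ j ∈ s, |A ^ j * g (A ^ j * z)| ≤ K * (2 * (1 - b)⁻¹) := by
    intro s
    have hsplit : ∑ j ∈ s, b ^ e j ≤ 2 * (1 - b)⁻¹ := by
      rw [← Finset.sum_filter_add_sum_filter_not s (· ≤ n)]
      have h1 : ∑ j ∈ s.filter (· ≤ n), b ^ e j ≤ (1 - b)⁻¹ := by
        have : ∀ j ∈ s.filter (· ≤ n), b ^ e j = b ^ (n - j).toNat := by
          intro j hjs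
          have hj := (Finset.mem_filter.mp hjs).2
          simp [he_def, hj]
        rw [Finset.sum_congr rfl this]
        refine aux_geom b hb0 hb1 _ _ ?_
        intro j hjs k hks h
        have hj := (Finset.mem_filter.mp hjs).2
        have hk := (Finset.mem_filter.mp hks).2
        omega
      have h2 : ∑ j ∈ s.filter (fun j => ¬ j ≤ n), b ^ e j ≤ (1 - b)⁻¹ := by
        have : ∀ j ∈ s.filter (fun j => ¬ j ≤ n), b ^ e j = b ^ (j - n - 1).toNat := by
          intro j hjs
          have hj := (Finset.mem_filter.mp hjs).2
          simp [he_def, hj]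
        rw [Finset.sum_congr rfl this]
        refine aux_geom b hb0 hb1 _ _ ?_
        intro j hjs k hks h
        have hj := (Finset.mem_filter.mp hjs).2
        have hk := (Finset.mem_filter.mp hks).2
        omega
      linarith
    calc ∑ j ∈ s, |A ^ j * g (A ^ j * z)| ≤ ∑ j ∈ s, K * b ^ e j :=
          Finset.sum_le_sum (fun j _ => key j)
      _ = K * ∑ j ∈ s, b ^ e j := by rw [Finset.mul_sum]
      _ ≤ K * (2 * (1 - b)⁻¹) := mul_le_mul_of_nonneg_left hsplit hK.le
  have hsummable : Summable (fun j : ℤ => |A ^ j * g (A ^ j * z)|) :=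
    summable_of_sum_le (fun j => abs_nonneg _) sum_bound
  refine ⟨hsummable, ?_⟩
  have htsum := Summable.tsum_le_of_sum_le hsummable sum_bound
  have hconst : K * (2 * (1 - b)⁻¹) = 2 * a / (a - 1) * Real.sqrt (σ * τ) / |z| := by
    rw [hK_def, hb_def]
    have h1 : a - 1 ≠ 0 := by linarith
    have h2 : 1 - a⁻¹ ≠ 0 := by
      have : a⁻¹ < 1 := by rwa [← hb_def]
      linarith
    field_simp
  rwa [hconst] at htsum
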